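/- Let D be a δ-unbiased distribution on {-1,1}^n. Suppose vectors u, w ∈ ℝ^n and scalars θ', θ'' satisfy E_{X∼D}[(σ(⟨w,X⟩+θ') − σ(⟨u,X⟩+θ''))²] ≤ ε with ε < δ·e^{-2‖w‖₁ − 2|θ'| − 6}. Then ‖w − u‖_∞ ≤ C·e^{‖w‖₁+|θ'|}·√(ε/δ) for some universal constant C. -/

import Mathlib

open Real

noncomputable def sg (x : ℝ) : ℝ := 1 / (1 + Real.exp (-x))

lemma sg_denom_pos (x : ℝ) : 0 < 1 + Real.exp (-x) := by positivity

lemma sg_strictMono : StrictMono sg := by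
  intro x y hxy
  unfold sg
  have := Real.exp_lt_exp.2 (neg_lt_neg hxy)
  exact one_div_lt_one_div_of_lt (sg_denom_pos y) (by linarith)

lemma sg_mono : Monotone sg := sg_strictMono.monotone

lemma one_sub_sg (x : ℝ) : 1 - sg x = sg (-x) := by
  unfold sg
  rw [neg_neg, Real.exp_neg]
  have h1 := Real.exp_pos x
  field_simp
  ring

lemma sg_neg_ge (R : ℝ) (hR : 0 ≤ R) : Real.exp (-R) / 2 ≤ sg (-R) := by
  unfold sg
  rw [neg_neg]
  rw [div_le_div_iff₀ (by norm_num) (by positivity : (0:ℝ) < 1 + Real.exp R)]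
  have h1 : Real.exp (-R) ≤ 1 := Real.exp_le_one_iff.2 (by linarith)
  have h2 : Real.exp (-R) * Real.exp R = 1 := by
    rw [← Real.exp_add]; simp
  nlinarith [Real.exp_pos R, Real.exp_pos (-R)]

lemma sg_neg_le (t : ℝ) : sg (-t) ≤ Real.exp (-t) := by
  unfold sg
  rw [neg_neg, Real.exp_neg, inv_eq_one_div]
  exact one_div_le_one_div_of_le (Real.exp_pos t) (by linarith [Real.exp_pos (-t)])

lemma sg_hasDerivAt (x : ℝ) :
    HasDerivAt sg (Real.exp (-x) / (1 + Real.exp (-x)) ^ 2) x := by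
  have h1 : HasDerivAt (fun y : ℝ => -y) (-1) x := (hasDerivAt_id x).neg
  have h2 : HasDerivAt (fun y : ℝ => Real.exp (-y)) (Real.exp (-x) * (-1)) x :=
    (Real.hasDerivAt_exp (-x)).comp x h1
  have h3 : HasDerivAt (fun y : ℝ => 1 + Real.exp (-y)) (Real.exp (-x) * (-1)) x :=
    h2.const_add 1
  have h4 := h3.inv (ne_of_gt (sg_denom_pos x))
  have : sg = fun y : ℝ => (1 + Real.exp (-y))⁻¹ := by
    funext y; unfold sg; rw [one_div]
  rw [this]
  refine h4.congr_deriv ?_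
  ring

lemma sg_deriv_ge (x : ℝ) :
    Real.exp (-|x|) / 4 ≤ Real.exp (-x) / (1 + Real.exp (-x)) ^ 2 := by
  have hb : 1 + Real.exp (-x) ≤ 2 * Real.exp (max 0 (-x)) := by
    have h1 : (1 : ℝ) ≤ Real.exp (max 0 (-x)) := by
      rw [← Real.exp_zero]; exact Real.exp_le_exp.2 (le_max_left _ _)
    have h2 : Real.exp (-x) ≤ Real.exp (max 0 (-x)) := Real.exp_le_exp.2 (le_max_right _ _)
    linarith
  have key : (1 + Real.exp (-x)) ^ 2 ≤ 4 * Real.exp (max 0 (-x)) ^ 2 := by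
    nlinarith [Real.exp_pos (max 0 (-x)), sg_denom_pos x]
  have heq : Real.exp (-|x|) / 4 = Real.exp (-x) / (4 * Real.exp (max 0 (-x)) ^ 2) := by
    have hE : Real.exp (max 0 (-x)) ^ 2 = Real.exp (max 0 (-x) + max 0 (-x)) := by
      rw [Real.exp_add, sq]
    rw [hE, div_eq_div_iff (by norm_num) (by positivity)]
    have h5 : Real.exp (-|x|) * Real.exp (max 0 (-x) + max 0 (-x)) = Real.exp (-x) := by
      rw [← Real.exp_add]; congr 1
      rcases le_or_gt 0 x with h|h
      · rw [abs_of_nonneg h, max_eq_left (by linarith)]; ring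
      · rw [abs_of_neg h, max_eq_right (by linarith)]; ring
    linear_combination 4 * h5
  rw [heq]
  exact div_le_div_of_nonneg_left (le_of_lt (Real.exp_pos _)) (by positivity) key

lemma sg_continuous : Continuous sg :=
  continuous_const.div (by continuity) (fun x => ne_of_gt (sg_denom_pos x))

/-- MVT step: if `a < b` both lie in `[-(R+2), R+2]` then
`b - a ≤ 30 e^R (sg b - sg a)`. -/
lemma mvt_aux (a b R : ℝ) (hab : a < b) (ha : -(R+2) ≤ a) (hb : b ≤ R+2) :
    b - a ≤ 30 * Real.exp R * (sg b - sg a) := by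
  obtain ⟨c, hc, hceq⟩ := exists_hasDerivAt_eq_slope sg
    (fun x => Real.exp (-x) / (1 + Real.exp (-x)) ^ 2) hab
    (sg_continuous.continuousOn) (fun x _ => sg_hasDerivAt x)
  have hcabs : |c| ≤ R + 2 := abs_le.2 ⟨by linarith [hc.1], by linarith [hc.2]⟩
  have hD1 : Real.exp (-(R+2)) / 4 ≤ Real.exp (-c) / (1 + Real.exp (-c)) ^ 2 := by
    refine le_trans ?_ (sg_deriv_ge c)
    have : -(R+2) ≤ -|c| := by linarith
    have := Real.exp_le_exp.2 this
    linarith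
  have hba : (0:ℝ) < b - a := by linarith
  have hslope : sg b - sg a = (Real.exp (-c) / (1 + Real.exp (-c)) ^ 2) * (b - a) := by
    rw [hceq]; field_simp
  have h1 : (b - a) * (Real.exp (-(R+2)) / 4) ≤ sg b - sg a := by
    rw [hslope]
    have := mul_le_mul_of_nonneg_left hD1 (le_of_lt hba)
    linarith
  have hid : Real.exp (-(R+2)) * Real.exp (R+2) = 1 := by
    have h0 : -(R+2)+(R+2) = 0 := by ring
    rw [← Real.exp_add, h0, Real.exp_zero]
  have hE2 : Real.exp (R+2) = Real.exp R * Real.exp 2 := by rw [← Real.exp_add]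
  have he2 : Real.exp 2 ≤ 7.4 := by
    have h := Real.exp_one_lt_d9
    have : Real.exp 2 = Real.exp 1 * Real.exp 1 := by rw [← Real.exp_add]; norm_num
    nlinarith [Real.exp_pos 1]
  -- from h1 : b - a ≤ 4 * exp (R+2) * (sg b - sg a)
  have h2 : b - a ≤ 4 * Real.exp (R+2) * (sg b - sg a) := by
    have := mul_le_mul_of_nonneg_left h1 (le_of_lt (Real.exp_pos (R+2)))
    nlinarith [Real.exp_pos (R+2)]
  have hsg : 0 ≤ sg b - sg a := by
    have := sg_mono (le_of_lt hab); linarith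
  calc b - a ≤ 4 * Real.exp (R+2) * (sg b - sg a) := h2
    _ = 4 * Real.exp 2 * Real.exp R * (sg b - sg a) := by rw [hE2]; ring
    _ ≤ 30 * Real.exp R * (sg b - sg a) := by
        have h30 : 4 * Real.exp 2 ≤ 30 := by nlinarith
        nlinarith [mul_le_mul_of_nonneg_right h30 (mul_nonneg (Real.exp_pos R).le hsg)]

/-- Key analytic lemma: sigmoid values close and `|a| ≤ R` imply arguments close. -/
lemma sg_inverse_bound (a b R η : ℝ) (hR : 0 ≤ R) (ha : |a| ≤ R)
    (hd : |sg a - sg b| ≤ η) (hsmall : η ≤ Real.exp (-R) / 8) :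
    |a - b| ≤ 30 * Real.exp R * η := by
  have hη0 : 0 ≤ η := le_trans (abs_nonneg _) hd
  have haR : -R ≤ a := by linarith [abs_le.1 ha |>.1]
  have haR' : a ≤ R := (abs_le.1 ha).2
  have hSa_lo : Real.exp (-R) / 2 ≤ sg a := le_trans (sg_neg_ge R hR) (sg_mono haR)
  have hSa_hi : Real.exp (-R) / 2 ≤ sg (-a) :=
    le_trans (sg_neg_ge R hR) (sg_mono (by linarith))
  have habs := abs_le.1 hd
  have hSb_lo : 3/8 * Real.exp (-R) ≤ sg b := by linarith
  have hSb_hi : 3/8 * Real.exp (-R) ≤ sg (-b) := by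
    have e1 := one_sub_sg a
    have e2 := one_sub_sg b
    linarith
  have hexp2 : Real.exp (-(R+2)) < 3/8 * Real.exp (-R) := by
    have : Real.exp (-(R+2)) = Real.exp (-R) * Real.exp (-2) := by
      rw [← Real.exp_add]; ring_nf
    rw [this]
    have h2 : Real.exp (-2) < 3/8 := by
      rw [Real.exp_neg]
      rw [inv_lt_iff_one_lt_mul₀ (Real.exp_pos 2)]
      have : Real.exp 2 = Real.exp 1 * Real.exp 1 := by rw [← Real.exp_add]; norm_num
      nlinarith [Real.exp_one_gt_d9]
    nlinarith [Real.exp_pos (-R)]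
  have hb_lo : -(R+2) ≤ b := by
    by_contra h
    push_neg at h
    have h2 : sg b ≤ sg (-(R+2)) := sg_mono h.le
    have h3 : sg (-(R+2)) ≤ Real.exp (-(R+2)) := sg_neg_le (R+2)
    linarith
  have hb_hi : b ≤ R+2 := by
    by_contra h
    push_neg at h
    have h2 : sg (-b) ≤ sg (-(R+2)) := sg_mono (by linarith)
    have h3 : sg (-(R+2)) ≤ Real.exp (-(R+2)) := sg_neg_le (R+2)
    linarith
  rcases lt_trichotomy a b with h|h|h
  · have := mvt_aux a b R h (by linarith) hb_hi
    have hmono : sg a ≤ sg b := sg_mono h.le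
    rw [abs_sub_comm, abs_of_pos (by linarith : (0:ℝ) < b - a)]
    have : sg b - sg a ≤ η := by
      rw [abs_sub_comm] at hd
      linarith [abs_le.1 hd |>.2]
    nlinarith [Real.exp_pos R, mvt_aux a b R h (by linarith) hb_hi,
      mul_le_mul_of_nonneg_left this (by positivity : (0:ℝ) ≤ 30 * Real.exp R)]
  · simp [h]; positivity
  · have := mvt_aux b a R h hb_lo (by linarith)
    have hmono : sg b ≤ sg a := sg_mono h.le
    rw [abs_of_pos (by linarith : (0:ℝ) < a - b)]
    have h5 : sg a - sg b ≤ η := by linarith [abs_le.1 hd |>.2]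
    nlinarith [Real.exp_pos R,
      mul_le_mul_of_nonneg_left h5 (by positivity : (0:ℝ) ≤ 30 * Real.exp R)]


noncomputable def lin {n : ℕ} (v : Fin n → ℝ) (θ : ℝ) (z : Fin n → Bool) : ℝ :=
  (∑ j, v j * (if z j then (1:ℝ) else -1)) + θ

lemma lin_abs_le {n : ℕ} (v : Fin n → ℝ) (θ : ℝ) (z : Fin n → Bool) :
    |lin v θ z| ≤ (∑ j, |v j|) + |θ| := by
  unfold lin
  calc |(∑ j, v j * (if z j then (1:ℝ) else -1)) + θ|
      ≤ |∑ j, v j * (if z j then (1:ℝ) else -1)| + |θ| := abs_add_le _ _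
    _ ≤ (∑ j, |v j * (if z j then (1:ℝ) else -1)|) + |θ| := by
        gcongr
        exact Finset.abs_sum_le_sum_abs _ _
    _ = (∑ j, |v j|) + |θ| := by
        congr 1
        refine Finset.sum_congr rfl (fun j _ => ?_)
        cases z j <;> simp [abs_mul]

lemma lin_flip {n : ℕ} (v : Fin n → ℝ) (θ : ℝ) (z : Fin n → Bool) (i : Fin n) :
    lin v θ z - lin v θ (Function.update z i (!(z i)))
      = 2 * v i * (if z i then (1:ℝ) else -1) := by
  unfold lin
  have h : (∑ j, v j * (if z j then (1:ℝ) else -1)) -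
      (∑ j, v j * (if (Function.update z i (!(z i))) j then (1:ℝ) else -1)) =
      ∑ j, (v j * (if z j then (1:ℝ) else -1) -
        v j * (if (Function.update z i (!(z i))) j then (1:ℝ) else -1)) :=
    (Finset.sum_sub_distrib _ _).symm
  have h2 : ∑ j, (v j * (if z j then (1:ℝ) else -1) -
        v j * (if (Function.update z i (!(z i))) j then (1:ℝ) else -1)) =
      2 * v i * (if z i then (1:ℝ) else -1) := by
    rw [Finset.sum_eq_single i]
    · rw [Function.update_self]
      cases z i <;> simp <;> ring
    · intro j _ hj
      rw [Function.update_of_ne hj]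
      ring
    · intro h; exact absurd (Finset.mem_univ i) h
  linarith [h, h2]

set_option maxHeartbeats 1000000

/-- If `D` is a δ-unbiased distribution on `{-1,1}^n` (spins encoded by `Bool` with value
`χ(b) = if b then 1 else -1`, δ-unbiasedness in multiplicative form) and
`E_{X∼D}[(σ(⟨w,X⟩+θ') − σ(⟨u,X⟩+θ''))²] ≤ ε` with `ε < δ·e^{-2‖w‖₁ − 2|θ'| − 6}`, then
`‖w − u‖_∞ ≤ C·e^{‖w‖₁+|θ'|}·√(ε/δ)` for a universal constant `C`. -/
theorem stmt_14 :
    ∃ C : ℝ, 0 < C ∧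
      ∀ (n : ℕ) (p : (Fin n → Bool) → ℝ) (δ ε θ' θ'' : ℝ) (w u : Fin n → ℝ),
        (∀ z, 0 ≤ p z) → (∑ z, p z = 1) → 0 < δ →
        (∀ (i : Fin n) (b : Bool) (x : Fin n → Bool),
          δ * ∑ z ∈ Finset.univ.filter (fun z : Fin n → Bool => ∀ j, j ≠ i → z j = x j), p z ≤
            ∑ z ∈ Finset.univ.filter
              (fun z : Fin n → Bool => z i = b ∧ ∀ j, j ≠ i → z j = x j), p z) →
        (∑ z, p z *
            (1 / (1 + Real.exp (-((∑ j, w j * (if z j then (1 : ℝ) else -1)) + θ'))) -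
             1 / (1 + Real.exp (-((∑ j, u j * (if z j then (1 : ℝ) else -1)) + θ'')))) ^ 2
          ≤ ε) →
        (ε < δ * Real.exp (-2 * (∑ j, |w j|) - 2 * |θ'| - 6)) →
        ∀ i : Fin n, |w i - u i| ≤
          C * Real.exp ((∑ j, |w j|) + |θ'|) * Real.sqrt (ε / δ) := by
  refine ⟨100, by norm_num, ?_⟩
  intro n p δ ε θ' θ'' w u hp hsum hδ hub hexp hε i
  -- notation
  set F : (Fin n → Bool) → ℝ := fun z => (sg (lin w θ' z) - sg (lin u θ'' z)) ^ 2 with hFdef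
  have hexp' : ∑ z, p z * F z ≤ ε := by
    simpa only [hFdef, sg, lin] using hexp
  have hF : ∀ z, 0 ≤ F z := fun z => sq_nonneg _
  set fl : (Fin n → Bool) → (Fin n → Bool) := fun z => Function.update z i (!(z i)) with hfldef
  have hinv : Function.Involutive fl := by
    intro z; funext j
    rcases eq_or_ne j i with rfl | hj
    · simp [hfldef, Function.update_self]
    · simp [hfldef, Function.update_of_ne hj]
  -- δ-unbiasedness consequence
  have hkey : ∀ z, δ * p z ≤ p (fl z) := by
    intro z
    have h := hub i (!(z i)) z
    have hBset : Finset.univ.filter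
        (fun z' : Fin n → Bool => z' i = !(z i) ∧ ∀ j, j ≠ i → z' j = z j) = {fl z} := by
      ext z'
      simp only [Finset.mem_filter, Finset.mem_univ, true_and, Finset.mem_singleton]
      constructor
      · rintro ⟨h1, h2⟩
        funext j
        rcases eq_or_ne j i with rfl | hj
        · rw [h1]; simp [hfldef, Function.update_self]
        · rw [h2 j hj]; simp [hfldef, Function.update_of_ne hj]
      · rintro rfl
        exact ⟨Function.update_self _ _ _, fun j hj => Function.update_of_ne hj _ _⟩
    rw [hBset, Finset.sum_singleton] at h
    have hmem : z ∈ Finset.univ.filter (fun z' : Fin n → Bool => ∀ j, j ≠ i → z' j = z j) :=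
      Finset.mem_filter.2 ⟨Finset.mem_univ z, fun j _ => rfl⟩
    have hple : p z ≤ ∑ z' ∈ Finset.univ.filter
        (fun z' : Fin n → Bool => ∀ j, j ≠ i → z' j = z j), p z' :=
      Finset.single_le_sum (fun z' _ => hp z') hmem
    calc δ * p z ≤ δ * ∑ z' ∈ Finset.univ.filter
          (fun z' : Fin n → Bool => ∀ j, j ≠ i → z' j = z j), p z' := by
          exact mul_le_mul_of_nonneg_left hple hδ.le
      _ ≤ p (fl z) := h
  -- some z has positive mass
  obtain ⟨z₀, hz₀⟩ : ∃ z, 0 < p z := by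
    have : (∑ _z : Fin n → Bool, (0:ℝ)) < ∑ z, p z := by rw [hsum]; simp
    obtain ⟨z, _, hz⟩ := Finset.exists_lt_of_sum_lt this
    exact ⟨z, hz⟩
  -- δ ≤ 1
  have hδ1 : δ ≤ 1 := by
    have h1 := hkey z₀
    have h2 := hkey (fl z₀)
    rw [hinv z₀] at h2
    nlinarith [hp (fl z₀)]
  have hε0 : 0 ≤ ε :=
    le_trans (Finset.sum_nonneg (fun z _ => mul_nonneg (hp z) (hF z))) hexp'
  -- reindexing sum by the flip involution
  have hreidx : ∑ z, p (fl z) * F (fl z) = ∑ z, p z * F z :=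
    Equiv.sum_comp hinv.toPerm (fun z => p z * F z)
  have hsum2 : ∑ z, p z * F (fl z) ≤ ε / δ := by
    have hδsum : δ * ∑ z, p z * F (fl z) ≤ ε := by
      calc δ * ∑ z, p z * F (fl z) = ∑ z, δ * p z * F (fl z) := by
            rw [Finset.mul_sum]; exact Finset.sum_congr rfl (fun z _ => by ring)
        _ ≤ ∑ z, p (fl z) * F (fl z) :=
            Finset.sum_le_sum (fun z _ => mul_le_mul_of_nonneg_right (hkey z) (hF (fl z)))
        _ = ∑ z, p z * F z := hreidx
        _ ≤ ε := hexp'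
    rw [le_div_iff₀ hδ]
    linarith
  have hεδ : ε ≤ ε / δ := by
    rw [le_div_iff₀ hδ]
    nlinarith
  have htot : ∑ z, p z * (F z + F (fl z)) ≤ 2 * (ε / δ) := by
    calc ∑ z, p z * (F z + F (fl z)) = (∑ z, p z * F z) + ∑ z, p z * F (fl z) := by
          rw [← Finset.sum_add_distrib]
          exact Finset.sum_congr rfl (fun z _ => by ring)
      _ ≤ ε + ε / δ := add_le_add hexp' hsum2
      _ ≤ 2 * (ε / δ) := by linarith
  -- a configuration where both flips have small error
  obtain ⟨z, hz⟩ : ∃ z, F z + F (fl z) ≤ 2 * (ε / δ) := by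
    by_contra h
    push_neg at h
    have hlt : ∑ z, p z * (2 * (ε / δ)) < ∑ z, p z * (F z + F (fl z)) :=
      Finset.sum_lt_sum (fun z _ => mul_le_mul_of_nonneg_left (h z).le (hp z))
        ⟨z₀, Finset.mem_univ z₀, mul_lt_mul_of_pos_left (h z₀) hz₀⟩
    rw [← Finset.sum_mul, hsum, one_mul] at hlt
    linarith
  have hFz : F z ≤ 2 * (ε / δ) := by linarith [hF (fl z)]
  have hFfz : F (fl z) ≤ 2 * (ε / δ) := by linarith [hF z]
  -- analytic setup
  set R : ℝ := (∑ j, |w j|) + |θ'| with hRdef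
  have hR : 0 ≤ R := by positivity
  set η : ℝ := Real.sqrt (2 * (ε / δ)) with hηdef
  have hεδ0 : 0 ≤ ε / δ := div_nonneg hε0 hδ.le
  have hsmall : η ≤ Real.exp (-R) / 8 := by
    have hlt : ε / δ < Real.exp (-2 * R - 6) := by
      rw [div_lt_iff₀ hδ]
      have : -2 * (∑ j, |w j|) - 2 * |θ'| - 6 = -2 * R - 6 := by rw [hRdef]; ring
      rw [← this, mul_comm]
      exact hε
    have hsq : 2 * (ε / δ) ≤ (Real.exp (-R) / 8) ^ 2 := by
      have hES : (Real.exp (-R) / 8) ^ 2 = Real.exp (-2 * R - 6) * (Real.exp 6 / 64) := by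
        have e1 : Real.exp (-R) ^ 2 = Real.exp (-2 * R) := by
          rw [sq, ← Real.exp_add]; congr 1; ring
        have e2 : Real.exp (-2 * R - 6) * Real.exp 6 = Real.exp (-2 * R) := by
          rw [← Real.exp_add]; congr 1; ring
        calc (Real.exp (-R) / 8) ^ 2 = Real.exp (-R) ^ 2 / 64 := by ring
          _ = Real.exp (-2 * R) / 64 := by rw [e1]
          _ = Real.exp (-2 * R - 6) * Real.exp 6 / 64 := by rw [e2]
          _ = Real.exp (-2 * R - 6) * (Real.exp 6 / 64) := by ring
      have h128 : (128:ℝ) ≤ Real.exp 6 := by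
        have h1 : (2.718:ℝ) < Real.exp 1 := by
          have := Real.exp_one_gt_d9
          linarith
        have h6 : Real.exp 6 = Real.exp 1 ^ 6 := by
          rw [← Real.exp_nat_mul]; norm_num
        have hle : (2.718:ℝ) ^ 6 ≤ Real.exp 1 ^ 6 :=
          pow_le_pow_left₀ (by norm_num) h1.le 6
        have : (128:ℝ) ≤ (2.718:ℝ) ^ 6 := by norm_num
        linarith [h6 ▸ hle]
      rw [hES]
      nlinarith [Real.exp_pos (-2 * R - 6)]
    calc η ≤ Real.sqrt ((Real.exp (-R) / 8) ^ 2) := Real.sqrt_le_sqrt hsq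
      _ = Real.exp (-R) / 8 := Real.sqrt_sq (by positivity)
  have hη0 : 0 ≤ η := Real.sqrt_nonneg _
  -- apply sigmoid inverse bound at z and fl z
  have habs : ∀ z' : Fin n → Bool, F z' ≤ 2 * (ε / δ) →
      |lin w θ' z' - lin u θ'' z'| ≤ 30 * Real.exp R * η := by
    intro z' hFz'
    apply sg_inverse_bound _ _ R η hR (lin_abs_le w θ' z')
    · rw [show |sg (lin w θ' z') - sg (lin u θ'' z')| =
          Real.sqrt (F z') from (Real.sqrt_sq_eq_abs _).symm]
      exact Real.sqrt_le_sqrt hFz'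
    · exact hsmall
  have hb1 := habs z hFz
  have hb2 := habs (fl z) hFfz
  -- extract coordinate difference
  have hwflip := lin_flip w θ' z i
  have huflip := lin_flip u θ'' z i
  have hcomb : |2 * (w i - u i) * (if z i then (1:ℝ) else -1)| ≤ 60 * Real.exp R * η := by
    have hiden : 2 * (w i - u i) * (if z i then (1:ℝ) else -1) =
        (lin w θ' z - lin u θ'' z) - (lin w θ' (fl z) - lin u θ'' (fl z)) := by
      have : fl z = Function.update z i (!(z i)) := rfl
      rw [this] at *
      linarith [hwflip, huflip]
    rw [hiden]
    calc |(lin w θ' z - lin u θ'' z) - (lin w θ' (fl z) - lin u θ'' (fl z))|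
        ≤ |lin w θ' z - lin u θ'' z| + |lin w θ' (fl z) - lin u θ'' (fl z)| := abs_sub _ _
      _ ≤ 30 * Real.exp R * η + 30 * Real.exp R * η := add_le_add hb1 hb2
      _ = 60 * Real.exp R * η := by ring
  have hchi : |2 * (w i - u i) * (if z i then (1:ℝ) else -1)| = 2 * |w i - u i| := by
    cases hzi : z i <;> simp [hzi, abs_mul]
  rw [hchi] at hcomb
  -- conclude
  have hsqrt2 : Real.sqrt 2 ≤ 2 := by
    nlinarith [Real.sq_sqrt (by norm_num : (0:ℝ) ≤ 2), Real.sqrt_nonneg 2]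
  have hηsplit : η = Real.sqrt 2 * Real.sqrt (ε / δ) := by
    rw [hηdef, Real.sqrt_mul (by norm_num : (0:ℝ) ≤ 2)]
  have hsq0 : 0 ≤ Real.sqrt (ε / δ) := Real.sqrt_nonneg _
  have hexpR : 0 < Real.exp R := Real.exp_pos R
  calc |w i - u i| ≤ 30 * Real.exp R * η := by linarith
    _ = 30 * Real.exp R * (Real.sqrt 2 * Real.sqrt (ε / δ)) := by rw [hηsplit]
    _ ≤ 100 * Real.exp R * Real.sqrt (ε / δ) := by
        have h1 : Real.sqrt 2 * Real.sqrt (ε / δ) ≤ 2 * Real.sqrt (ε / δ) :=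
          mul_le_mul_of_nonneg_right hsqrt2 hsq0
        nlinarith [mul_le_mul_of_nonneg_left h1 (by positivity : (0:ℝ) ≤ 30 * Real.exp R),
          mul_nonneg hexpR.le hsq0]
    _ = 100 * Real.exp ((∑ j, |w j|) + |θ'|) * Real.sqrt (ε / δ) := by rw [hRdef]
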